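/- A holomorphic function ψ on the right half-plane ℍ has nonnegative real part if and only if the kernel K(z,w) = (ψ(z) + conj(ψ(w)))/(z + conj w) is a positive kernel on ℍ, i.e., for all n, all scalars c₁,…,cₙ ∈ ℂ, and all points x₁,…,xₙ ∈ ℍ, we have Σ_{i,j} c_i conj(c_j) K(x_i,x_j) ≥ 0 (the sum is real and nonnegative). -/

import Mathlib

open Complex MeasureTheory Filter Topology Set

noncomputable section

/-- The open right half-plane. -/
def RHP : Set ℂ := {z : ℂ | 0 < z.re}

/-- The Szegő kernel of the right half-plane: `kern w z = k_w(z) = 1/(z + conj w)`. -/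
def kern (w z : ℂ) : ℂ := 1 / (z + (starRingEnd ℂ) w)

/-- The mean of `|f|^2` on the vertical line `Re = x`. -/
def hardyMean2 (f : ℂ → ℂ) (x : ℝ) : ℝ :=
  (1 / (2 * Real.pi)) * ∫ y : ℝ, ‖f (x + y * Complex.I)‖ ^ 2

/-- Membership in the Hardy space `H²(ℍ)` of the right half-plane. -/
def MemHardy2 (f : ℂ → ℂ) : Prop :=
  DifferentiableOn ℂ f RHP ∧ ∃ C : ℝ, ∀ x : ℝ, 0 < x → hardyMean2 f x ≤ C

/-- The squared `H²` norm, as the supremum of the vertical-line means. -/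
def hardyNormSq (f : ℂ → ℂ) : ℝ :=
  sSup {m : ℝ | ∃ x : ℝ, 0 < x ∧ m = hardyMean2 f x}

/-- `HardyInnerTendsto f g L` says the `H²(ℍ)` inner product `⟨f, g⟩` equals `L`,
realized as a limit of inner products over vertical lines `Re = x` as `x → 0⁺`. -/
def HardyInnerTendsto (f g : ℂ → ℂ) (L : ℂ) : Prop :=
  Tendsto (fun x : ℝ => ((1 / (2 * Real.pi) : ℝ) : ℂ) *
      ∫ y : ℝ, f (x + y * Complex.I) * (starRingEnd ℂ) (g (x + y * Complex.I)))
    (𝓝[>] (0 : ℝ)) (𝓝 L)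

/-- The composition operator `C_φ : f ↦ f ∘ φ` is bounded on `H²(ℍ)` with bound `M`. -/
def CompBoundedBy (φ : ℂ → ℂ) (M : ℝ) : Prop :=
  ∀ f : ℂ → ℂ, MemHardy2 f →
    MemHardy2 (f ∘ φ) ∧ hardyNormSq (f ∘ φ) ≤ M ^ 2 * hardyNormSq f

/-- The operator norm of the composition operator `C_φ` on `H²(ℍ)`. -/
def compNorm (φ : ℂ → ℂ) : ℝ :=
  sInf {M : ℝ | 0 ≤ M ∧ CompBoundedBy φ M}

/-- A kernel `K : X × X → ℂ` is positive if every finite Gram sum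
`∑ᵢⱼ cᵢ conj(cⱼ) K(xᵢ,xⱼ)` is real and nonnegative. -/
def IsPosKernel {X : Type*} (K : X → X → ℂ) : Prop :=
  ∀ (n : ℕ) (c : Fin n → ℂ) (x : Fin n → X),
    0 ≤ (∑ i, ∑ j, c i * (starRingEnd ℂ) (c j) * K (x i) (x j)).re ∧
    (∑ i, ∑ j, c i * (starRingEnd ℂ) (c j) * K (x i) (x j)).im = 0

section
open Metric
set_option maxHeartbeats 1000000
lemma cauchy_pair (f : ℂ → ℂ) (ρ : ℝ) (hρ : 1 < ρ)
    (hf : DifferentiableOn ℂ f (ball 0 ρ)) (a b : ℂ)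
    (ha : ‖a‖ < 1) (hb : ‖b‖ < 1) :
    ∫ θ in (0:ℝ)..2*Real.pi, f (circleMap 0 1 θ) *
      ((1 - circleMap 0 1 θ * (starRingEnd ℂ) a)⁻¹ *
       (circleMap 0 1 θ * (circleMap 0 1 θ - b)⁻¹))
    = 2 * Real.pi * (f b * (1 - b * (starRingEnd ℂ) a)⁻¹) := by
  set h : ℂ → ℂ := fun z => f z * (1 - z * (starRingEnd ℂ) a)⁻¹ with hh
  have hden : ∀ z : ℂ, ‖z‖ ≤ 1 → 1 - z * (starRingEnd ℂ) a ≠ 0 := by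
    intro z hz
    intro h0
    have : ‖z * (starRingEnd ℂ) a‖ < 1 := by
      rw [norm_mul, Complex.norm_conj]
      calc ‖z‖ * ‖a‖ ≤ 1 * ‖a‖ := by
            exact mul_le_mul_of_nonneg_right hz (norm_nonneg a)
        _ < 1 := by simpa using ha
    have h1 : z * (starRingEnd ℂ) a = 1 := by linear_combination -h0
    rw [h1] at this; simp at this
  have hd : DifferentiableOn ℂ h (closedBall 0 1) := by
    have hsub : closedBall (0:ℂ) 1 ⊆ ball 0 ρ := closedBall_subset_ball hρ
    apply DifferentiableOn.mul (hf.mono hsub)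
    apply DifferentiableOn.inv
    · exact (differentiableOn_const _).sub (differentiableOn_id.mul (differentiableOn_const _))
    · intro z hz; exact hden z (by simpa [Complex.dist_eq] using mem_closedBall.mp hz)
  have key := hd.circleIntegral_sub_inv_smul
    (show b ∈ ball (0:ℂ) 1 by simpa [Complex.dist_eq] using hb)
  rw [circleIntegral] at key
  simp only [deriv_circleMap, smul_eq_mul] at key
  have heq : (∫ θ in (0:ℝ)..2*Real.pi, circleMap 0 1 θ * I *
      ((circleMap 0 1 θ - b)⁻¹ * h (circleMap 0 1 θ)))
      = I * ∫ θ in (0:ℝ)..2*Real.pi, f (circleMap 0 1 θ) *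
      ((1 - circleMap 0 1 θ * (starRingEnd ℂ) a)⁻¹ *
       (circleMap 0 1 θ * (circleMap 0 1 θ - b)⁻¹)) := by
    rw [← intervalIntegral.integral_const_mul]
    apply intervalIntegral.integral_congr
    intro θ _
    simp only [hh]; ring
  rw [heq] at key
  apply mul_left_cancel₀ I_ne_zero
  rw [key, hh]; ring

lemma circle_facts (θ : ℝ) : ‖circleMap 0 1 θ‖ = 1 := by
  simp [norm_circleMap_zero]

lemma disk_nice (f : ℂ → ℂ) (ρ : ℝ) (hρ : 1 < ρ)
    (hf : DifferentiableOn ℂ f (ball 0 ρ))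
    (hre : ∀ θ : ℝ, 0 ≤ (f (circleMap 0 1 θ)).re)
    (n : ℕ) (c w : Fin n → ℂ) (hw : ∀ i, ‖w i‖ < 1) :
    0 ≤ (∑ i, ∑ j, c i * (starRingEnd ℂ) (c j) *
        ((f (w i) + (starRingEnd ℂ) (f (w j))) * (1 - w i * (starRingEnd ℂ) (w j))⁻¹)).re ∧
    (∑ i, ∑ j, c i * (starRingEnd ℂ) (c j) *
        ((f (w i) + (starRingEnd ℂ) (f (w j))) * (1 - w i * (starRingEnd ℂ) (w j))⁻¹)).im = 0 := by
  classical
  set S := ∑ i, ∑ j, c i * (starRingEnd ℂ) (c j) *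
      ((f (w i) + (starRingEnd ℂ) (f (w j))) * (1 - w i * (starRingEnd ℂ) (w j))⁻¹) with hS
  set T := ∑ j, ∑ k, (starRingEnd ℂ) (c j) * c k *
      (f (w k) * (1 - w k * (starRingEnd ℂ) (w j))⁻¹) with hT
  set g : ℂ → ℂ := fun z => ∑ j, (starRingEnd ℂ) (c j) * (1 - z * (starRingEnd ℂ) (w j))⁻¹
    with hg
  -- nonvanishing of denominators on the closed disk
  have hden : ∀ (z : ℂ) (i : Fin n), ‖z‖ ≤ 1 → 1 - z * (starRingEnd ℂ) (w i) ≠ 0 := by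
    intro z i hz h0
    have h1 : z * (starRingEnd ℂ) (w i) = 1 := by linear_combination -h0
    have : ‖z * (starRingEnd ℂ) (w i)‖ < 1 := by
      rw [norm_mul, Complex.norm_conj]
      calc ‖z‖ * ‖w i‖ ≤ 1 * ‖w i‖ :=
            mul_le_mul_of_nonneg_right hz (norm_nonneg _)
        _ < 1 := by simpa using hw i
    rw [h1] at this; simp at this
  have hsub : ∀ (z : ℂ) (k : Fin n), ‖z‖ = 1 → circleMap 0 1 0 = circleMap 0 1 0 := fun _ _ _ => rfl
  -- continuity of f on the circle
  have hfc : Continuous fun θ : ℝ => f (circleMap 0 1 θ) := by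
    apply hf.continuousOn.comp_continuous (continuous_circleMap 0 1)
    intro θ
    simp only [mem_ball, Complex.dist_eq, sub_zero]
    rw [circle_facts θ]; exact hρ
  have hinv1 : ∀ j : Fin n, Continuous fun θ : ℝ =>
      (1 - circleMap 0 1 θ * (starRingEnd ℂ) (w j))⁻¹ := by
    intro j
    apply Continuous.inv₀
    · exact continuous_const.sub ((continuous_circleMap 0 1).mul continuous_const)
    · intro θ; exact hden _ j (le_of_eq (circle_facts θ))
  have hinv2 : ∀ k : Fin n, Continuous fun θ : ℝ =>
      circleMap 0 1 θ * (circleMap 0 1 θ - w k)⁻¹ := by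
    intro k
    apply (continuous_circleMap 0 1).mul
    apply Continuous.inv₀ ((continuous_circleMap 0 1).sub continuous_const)
    intro θ
    intro h0
    have := circle_facts θ
    rw [sub_eq_zero.mp h0] at this
    exact absurd this (ne_of_lt (hw k))
  -- each (j,k) integrand is integrable
  have hcontterm : ∀ j k : Fin n, Continuous (fun θ : ℝ =>
      (starRingEnd ℂ) (c j) * c k * (f (circleMap 0 1 θ) *
        ((1 - circleMap 0 1 θ * (starRingEnd ℂ) (w j))⁻¹ *
         (circleMap 0 1 θ * (circleMap 0 1 θ - w k)⁻¹)))) := by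
    intro j k
    exact continuous_const.mul (hfc.mul ((hinv1 j).mul (hinv2 k)))
  have hint : ∀ j k : Fin n, IntervalIntegrable (fun θ : ℝ =>
      (starRingEnd ℂ) (c j) * c k * (f (circleMap 0 1 θ) *
        ((1 - circleMap 0 1 θ * (starRingEnd ℂ) (w j))⁻¹ *
         (circleMap 0 1 θ * (circleMap 0 1 θ - w k)⁻¹))))
      MeasureTheory.volume 0 (2*Real.pi) := by
    intro j k
    exact (hcontterm j k).intervalIntegrable _ _
  have hintsum : ∀ j : Fin n, IntervalIntegrable (fun θ : ℝ => ∑ k,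
      (starRingEnd ℂ) (c j) * c k * (f (circleMap 0 1 θ) *
        ((1 - circleMap 0 1 θ * (starRingEnd ℂ) (w j))⁻¹ *
         (circleMap 0 1 θ * (circleMap 0 1 θ - w k)⁻¹))))
      MeasureTheory.volume 0 (2*Real.pi) := by
    intro j
    exact (continuous_finset_sum _ (fun k _ => hcontterm j k)).intervalIntegrable _ _
  -- pointwise expansion on the circle
  have hpt : ∀ θ : ℝ, f (circleMap 0 1 θ) * (g (circleMap 0 1 θ) *
        (starRingEnd ℂ) (g (circleMap 0 1 θ)))
      = ∑ j, ∑ k, (starRingEnd ℂ) (c j) * c k * (f (circleMap 0 1 θ) *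
        ((1 - circleMap 0 1 θ * (starRingEnd ℂ) (w j))⁻¹ *
         (circleMap 0 1 θ * (circleMap 0 1 θ - w k)⁻¹))) := by
    intro θ
    set z := circleMap 0 1 θ with hz
    have habs : ‖z‖ = 1 := circle_facts θ
    have hz0 : z ≠ 0 := by intro h; rw [h] at habs; simp at habs
    have hzz : z * (starRingEnd ℂ) z = 1 := by
      rw [Complex.mul_conj]
      norm_cast
      rw [Complex.normSq_eq_norm_sq, habs]; norm_num
    have hconjg : (starRingEnd ℂ) (g z) = ∑ k, c k * (z * (z - w k)⁻¹) := by
      rw [hg]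
      simp only [map_sum, map_mul, map_inv₀, map_sub, map_one, Complex.conj_conj]
      apply Finset.sum_congr rfl
      intro k _
      congr 1
      have hzw : z - w k ≠ 0 := by
        intro h0
        have := habs; rw [sub_eq_zero.mp h0] at this
        exact absurd this (ne_of_lt (hw k))
      have hfact : 1 - (starRingEnd ℂ) z * w k = (starRingEnd ℂ) z * (z - w k) := by
        rw [mul_sub]
        rw [mul_comm ((starRingEnd ℂ) z) z, hzz]
      rw [hfact, mul_inv]
      have hcz : ((starRingEnd ℂ) z)⁻¹ = z := inv_eq_of_mul_eq_one_left hzz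
      rw [hcz]
    rw [hconjg, hg]
    rw [Finset.sum_mul_sum]
    rw [Finset.mul_sum]
    apply Finset.sum_congr rfl
    intro j _
    rw [Finset.mul_sum]
    apply Finset.sum_congr rfl
    intro k _
    ring
  -- the integral identity
  have hI : (∫ θ in (0:ℝ)..2*Real.pi, f (circleMap 0 1 θ) * (g (circleMap 0 1 θ) *
        (starRingEnd ℂ) (g (circleMap 0 1 θ)))) = (2*Real.pi : ℝ) * T := by
    rw [intervalIntegral.integral_congr (g := fun θ => ∑ j, ∑ k,
      (starRingEnd ℂ) (c j) * c k * (f (circleMap 0 1 θ) *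
        ((1 - circleMap 0 1 θ * (starRingEnd ℂ) (w j))⁻¹ *
         (circleMap 0 1 θ * (circleMap 0 1 θ - w k)⁻¹)))) (fun θ _ => hpt θ)]
    rw [intervalIntegral.integral_finset_sum (μ := MeasureTheory.volume) (a := (0:ℝ))
      (b := 2*Real.pi) (s := Finset.univ)
      (f := fun j θ => ∑ k, (starRingEnd ℂ) (c j) * c k * (f (circleMap 0 1 θ) *
        ((1 - circleMap 0 1 θ * (starRingEnd ℂ) (w j))⁻¹ *
         (circleMap 0 1 θ * (circleMap 0 1 θ - w k)⁻¹))))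
      (fun j _ => hintsum j)]
    have : ∀ j ∈ (Finset.univ : Finset (Fin n)), (∫ θ in (0:ℝ)..2*Real.pi, ∑ k,
        (starRingEnd ℂ) (c j) * c k * (f (circleMap 0 1 θ) *
        ((1 - circleMap 0 1 θ * (starRingEnd ℂ) (w j))⁻¹ *
         (circleMap 0 1 θ * (circleMap 0 1 θ - w k)⁻¹))))
        = ∑ k, (starRingEnd ℂ) (c j) * c k *
          (2 * Real.pi * (f (w k) * (1 - w k * (starRingEnd ℂ) (w j))⁻¹)) := by
      intro j _
      rw [intervalIntegral.integral_finset_sum (μ := MeasureTheory.volume) (a := (0:ℝ))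
        (b := 2*Real.pi) (s := Finset.univ)
        (f := fun k θ => (starRingEnd ℂ) (c j) * c k * (f (circleMap 0 1 θ) *
          ((1 - circleMap 0 1 θ * (starRingEnd ℂ) (w j))⁻¹ *
           (circleMap 0 1 θ * (circleMap 0 1 θ - w k)⁻¹))))
        (fun k _ => hint j k)]
      apply Finset.sum_congr rfl
      intro k _
      rw [intervalIntegral.integral_const_mul]
      rw [cauchy_pair f ρ hρ hf (w j) (w k) (hw j) (hw k)]
    rw [Finset.sum_congr rfl this, hT]
    push_cast
    rw [Finset.mul_sum]
    apply Finset.sum_congr rfl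
    intro j _
    rw [Finset.mul_sum]
    apply Finset.sum_congr rfl
    intro k _
    ring
  -- continuity of the full integrand
  have hgc : Continuous fun θ : ℝ => g (circleMap 0 1 θ) := by
    rw [hg]
    exact continuous_finset_sum _ (fun j _ => continuous_const.mul (hinv1 j))
  have hFull : IntervalIntegrable (fun θ : ℝ => f (circleMap 0 1 θ) * (g (circleMap 0 1 θ) *
      (starRingEnd ℂ) (g (circleMap 0 1 θ)))) MeasureTheory.volume 0 (2*Real.pi) :=
    (hfc.mul (hgc.mul (Complex.continuous_conj.comp hgc))).intervalIntegrable _ _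
  -- real part of T is nonnegative
  have hTre : 0 ≤ T.re := by
    have h1 : ((2*Real.pi : ℝ) : ℂ) * T = ∫ θ in (0:ℝ)..2*Real.pi,
        f (circleMap 0 1 θ) * (g (circleMap 0 1 θ) *
          (starRingEnd ℂ) (g (circleMap 0 1 θ))) := hI.symm
    have h2 : (2*Real.pi) * T.re = ∫ θ in (0:ℝ)..2*Real.pi,
        (f (circleMap 0 1 θ) * (g (circleMap 0 1 θ) *
          (starRingEnd ℂ) (g (circleMap 0 1 θ)))).re := by
      rw [← Complex.re_ofReal_mul, h1]
      exact (Complex.reCLM.intervalIntegral_comp_comm hFull).symm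
    have h3 : 0 ≤ ∫ θ in (0:ℝ)..2*Real.pi,
        (f (circleMap 0 1 θ) * (g (circleMap 0 1 θ) *
          (starRingEnd ℂ) (g (circleMap 0 1 θ)))).re := by
      apply intervalIntegral.integral_nonneg Real.two_pi_pos.le
      intro θ _
      rw [Complex.mul_conj]
      rw [mul_comm (f (circleMap 0 1 θ)), Complex.re_ofReal_mul]
      exact mul_nonneg (Complex.normSq_nonneg _) (hre θ)
    nlinarith [Real.pi_pos]
  -- S = T + conj T
  have hSTT : S = T + (starRingEnd ℂ) T := by
    have hconjT : (starRingEnd ℂ) T = ∑ i, ∑ j, c i * (starRingEnd ℂ) (c j) *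
        ((starRingEnd ℂ) (f (w j)) * (1 - (starRingEnd ℂ) (w j) * w i)⁻¹) := by
      rw [hT, map_sum]
      apply Finset.sum_congr rfl
      intro i _
      rw [map_sum]
      apply Finset.sum_congr rfl
      intro j _
      simp only [map_mul, map_inv₀, map_sub, map_one, Complex.conj_conj]
    have hTswap : T = ∑ i, ∑ j, (starRingEnd ℂ) (c j) * c i *
        (f (w i) * (1 - w i * (starRingEnd ℂ) (w j))⁻¹) := by
      rw [hT]; exact Finset.sum_comm
    rw [hS, hconjT, hTswap, ← Finset.sum_add_distrib]
    apply Finset.sum_congr rfl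
    intro i _
    rw [← Finset.sum_add_distrib]
    apply Finset.sum_congr rfl
    intro j _
    ring
  constructor
  · rw [hSTT]
    simp only [Complex.add_re, Complex.conj_re]
    linarith
  · rw [hSTT]
    simp [Complex.add_im, Complex.conj_im]

lemma disk_main (f : ℂ → ℂ) (hf : DifferentiableOn ℂ f (ball 0 1))
    (hre : ∀ z ∈ ball (0:ℂ) 1, 0 ≤ (f z).re)
    (n : ℕ) (c w : Fin n → ℂ) (hw : ∀ i, ‖w i‖ < 1) :
    0 ≤ (∑ i, ∑ j, c i * (starRingEnd ℂ) (c j) *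
        ((f (w i) + (starRingEnd ℂ) (f (w j))) * (1 - w i * (starRingEnd ℂ) (w j))⁻¹)).re ∧
    (∑ i, ∑ j, c i * (starRingEnd ℂ) (c j) *
        ((f (w i) + (starRingEnd ℂ) (f (w j))) * (1 - w i * (starRingEnd ℂ) (w j))⁻¹)).im = 0 := by
  classical
  set S := ∑ i, ∑ j, c i * (starRingEnd ℂ) (c j) *
      ((f (w i) + (starRingEnd ℂ) (f (w j))) * (1 - w i * (starRingEnd ℂ) (w j))⁻¹) with hS
  set Sfun : ℝ → ℂ := fun r => ∑ i, ∑ j, c i * (starRingEnd ℂ) (c j) *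
      ((f ((r:ℂ) * w i) + (starRingEnd ℂ) (f ((r:ℂ) * w j))) *
        (1 - w i * (starRingEnd ℂ) (w j))⁻¹) with hSfun
  have hr_bound : ∀ r : ℝ, r ∈ Ioo (0:ℝ) 1 → 0 ≤ (Sfun r).re ∧ (Sfun r).im = 0 := by
    intro r hr
    have h1r : (1:ℝ) < r⁻¹ := ((one_lt_inv₀ hr.1).mpr hr.2)
    have hmaps : ∀ z ∈ ball (0:ℂ) r⁻¹, (r:ℂ) * z ∈ ball (0:ℂ) 1 := by
      intro z hz
      simp only [mem_ball, Complex.dist_eq, sub_zero] at hz ⊢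
      rw [norm_mul, Complex.norm_real, Real.norm_of_nonneg hr.1.le]
      calc r * ‖z‖ < r * r⁻¹ := by
            exact mul_lt_mul_of_pos_left hz hr.1
        _ = 1 := mul_inv_cancel₀ (ne_of_gt hr.1)
    have hdiff : DifferentiableOn ℂ (fun z => f ((r:ℂ) * z)) (ball 0 r⁻¹) := by
      apply DifferentiableOn.comp hf
      · exact (differentiableOn_const _).mul differentiableOn_id
      · intro z hz; exact hmaps z hz
    have hrec : ∀ θ : ℝ, 0 ≤ (f ((r:ℂ) * circleMap 0 1 θ)).re := by
      intro θ
      apply hre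
      apply hmaps
      simp only [mem_ball, Complex.dist_eq, sub_zero, circle_facts θ]
      exact h1r
    exact disk_nice (fun z => f ((r:ℂ) * z)) r⁻¹ h1r hdiff hrec n c w hw
  have hlim : Tendsto Sfun (𝓝[<] (1:ℝ)) (𝓝 S) := by
    rw [hSfun, hS]
    apply tendsto_finset_sum
    intro i _
    apply tendsto_finset_sum
    intro j _
    have hfc : ∀ k : Fin n, Tendsto (fun r : ℝ => f ((r:ℂ) * w k)) (𝓝[<] (1:ℝ))
        (𝓝 (f (w k))) := by
      intro k
      have hck : ContinuousAt f (w k) :=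
        (hf.differentiableAt (isOpen_ball.mem_nhds (by
          simpa [mem_ball, Complex.dist_eq] using hw k))).continuousAt
      have hmul : Tendsto (fun r : ℝ => (r:ℂ) * w k) (𝓝[<] (1:ℝ)) (𝓝 (w k)) := by
        have : Tendsto (fun r : ℝ => (r:ℂ) * w k) (𝓝 (1:ℝ)) (𝓝 ((1:ℂ) * w k)) :=
          (Complex.continuous_ofReal.mul continuous_const).tendsto 1
        rw [one_mul] at this
        exact this.mono_left nhdsWithin_le_nhds
      exact hck.tendsto.comp hmul
    exact (tendsto_const_nhds.mul (((hfc i).add ((Complex.continuous_conj.tendsto _).comp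
      (hfc j))).mul tendsto_const_nhds))
  have hev : ∀ᶠ r in 𝓝[<] (1:ℝ), r ∈ Ioo (0:ℝ) 1 :=
    Ioo_mem_nhdsLT_of_mem ⟨zero_lt_one, le_refl 1⟩
  constructor
  · apply ge_of_tendsto ((Complex.continuous_re.tendsto S).comp hlim)
    filter_upwards [hev] with r hr
    exact (hr_bound r hr).1
  · have him : Tendsto (fun r => (Sfun r).im) (𝓝[<] (1:ℝ)) (𝓝 S.im) :=
      (Complex.continuous_im.tendsto S).comp hlim
    have him0 : Tendsto (fun r => (Sfun r).im) (𝓝[<] (1:ℝ)) (𝓝 0) := by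
      apply Tendsto.congr' _ tendsto_const_nhds
      filter_upwards [hev] with r hr
      exact ((hr_bound r hr).2).symm
    exact tendsto_nhds_unique him him0

theorem nevanlinna_aux (ψ : ℂ → ℂ) (hol : DifferentiableOn ℂ ψ RHP) :
    (∀ z ∈ RHP, 0 ≤ (ψ z).re) ↔
      (∀ (n : ℕ) (c : Fin n → ℂ) (x : Fin n → RHP),
        0 ≤ (∑ i, ∑ j, c i * (starRingEnd ℂ) (c j) *
          ((ψ (x i) + (starRingEnd ℂ) (ψ (x j))) /
            ((x i : ℂ) + (starRingEnd ℂ) (x j : ℂ)))).re ∧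
        (∑ i, ∑ j, c i * (starRingEnd ℂ) (c j) *
          ((ψ (x i) + (starRingEnd ℂ) (ψ (x j))) /
            ((x i : ℂ) + (starRingEnd ℂ) (x j : ℂ)))).im = 0) := by
  constructor
  · intro hre n c x
    classical
    set z : Fin n → ℂ := fun i => (x i : ℂ) with hzdef
    have hz : ∀ i, 0 < (z i).re := fun i => (x i).2
    have hz1 : ∀ i, z i + 1 ≠ 0 := by
      intro i h
      have := congrArg Complex.re h
      simp only [Complex.add_re, Complex.one_re, Complex.zero_re] at this
      linarith [hz i]
    set w : Fin n → ℂ := fun i => (z i - 1) / (z i + 1) with hwdef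
    have hwlt : ∀ i, ‖w i‖ < 1 := by
      intro i
      have hns : Complex.normSq (z i - 1) < Complex.normSq (z i + 1) := by
        simp only [Complex.normSq_apply, Complex.sub_re, Complex.sub_im,
          Complex.add_re, Complex.add_im, Complex.one_re, Complex.one_im]
        nlinarith [hz i]
      have habs : ‖z i - 1‖ < ‖z i + 1‖ := by
        rw [Complex.norm_def, Complex.norm_def]
        exact Real.sqrt_lt_sqrt (Complex.normSq_nonneg _) hns
      rw [hwdef]
      simp only [norm_div]
      rw [div_lt_one (norm_pos_iff.mpr (hz1 i))]
      exact habs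
    set f : ℂ → ℂ := fun u => ψ ((1 + u) / (1 - u)) with hfdef
    have hmapsTo : ∀ u ∈ ball (0:ℂ) 1, (1 + u) / (1 - u) ∈ RHP := by
      intro u hu
      have hu1 : ‖u‖ < 1 := by simpa [Complex.dist_eq] using hu
      have hns : Complex.normSq u < 1 := by
        rw [← Complex.sq_norm]; nlinarith [norm_nonneg u]
      have hne : (1:ℂ) - u ≠ 0 := by
        intro h
        have : u = 1 := by linear_combination -h
        rw [this] at hu1; simp at hu1
      have hpos : 0 < Complex.normSq (1 - u) := Complex.normSq_pos.mpr hne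
      show 0 < ((1 + u) / (1 - u)).re
      rw [Complex.div_re]
      have hnum : (1 + u).re * (1 - u).re + (1 + u).im * (1 - u).im
          = 1 - Complex.normSq u := by
        simp only [Complex.normSq_apply, Complex.add_re, Complex.add_im,
          Complex.sub_re, Complex.sub_im, Complex.one_re, Complex.one_im]
        ring
      rw [← add_div, hnum]
      exact div_pos (by linarith) hpos
    have hball_ne : ∀ u : ℂ, u ∈ ball (0:ℂ) 1 → (1:ℂ) - u ≠ 0 := by
      intro u hu h
      have hu1 : ‖u‖ < 1 := by simpa [Complex.dist_eq] using hu
      have : u = 1 := by linear_combination -h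
      rw [this] at hu1; simp at hu1
    have hfdiff : DifferentiableOn ℂ f (ball 0 1) := by
      apply DifferentiableOn.comp hol
      · exact DifferentiableOn.div ((differentiableOn_const _).add differentiableOn_id)
          ((differentiableOn_const _).sub differentiableOn_id) hball_ne
      · intro u hu; exact hmapsTo u hu
    have hfre : ∀ u ∈ ball (0:ℂ) 1, 0 ≤ (f u).re := fun u hu => hre _ (hmapsTo u hu)
    have hwmem : ∀ i, w i ∈ ball (0:ℂ) 1 := by
      intro i; simp only [mem_ball, Complex.dist_eq, sub_zero]; exact hwlt i
    have hfw : ∀ i, f (w i) = ψ (z i) := by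
      intro i
      have h1 : (1:ℂ) - w i ≠ 0 := hball_ne _ (hwmem i)
      have hcayley : (1 + w i) / (1 - w i) = z i := by
        rw [div_eq_iff h1]
        simp only [hwdef]
        field_simp [hz1 i]
        try ring
      simp only [hfdef]
      rw [hcayley]
    set d : Fin n → ℂ := fun i => c i * (1 - w i) with hddef
    obtain ⟨hdre, hdim⟩ := disk_main f hfdiff hfre n d w hwlt
    have hker0 : ∀ i j, 1 - w i * (starRingEnd ℂ) (w j) ≠ 0 := by
      intro i j h
      have h1 : w i * (starRingEnd ℂ) (w j) = 1 := by linear_combination -h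
      have : ‖w i * (starRingEnd ℂ) (w j)‖ < 1 := by
        rw [norm_mul, Complex.norm_conj]
        calc ‖w i‖ * ‖w j‖ ≤ 1 * ‖w j‖ :=
              mul_le_mul_of_nonneg_right (hwlt i).le (norm_nonneg _)
          _ < 1 := by simpa using hwlt j
      rw [h1] at this; simp at this
    have hsum0 : ∀ i j, z i + (starRingEnd ℂ) (z j) ≠ 0 := by
      intro i j h
      have := congrArg Complex.re h
      simp only [Complex.add_re, Complex.conj_re, Complex.zero_re] at this
      linarith [hz i, hz j]
    have e1 : ∀ i, (1:ℂ) - w i = 2 / (z i + 1) := by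
      intro i
      simp only [hwdef]
      rw [eq_div_iff (hz1 i), sub_mul, div_mul_cancel₀ _ (hz1 i)]
      ring
    have hcz1 : ∀ j, (starRingEnd ℂ) (z j) + 1 ≠ 0 := by
      intro j h
      apply hz1 j
      have := congrArg (starRingEnd ℂ) h
      simpa using this
    have e2 : ∀ j, (1:ℂ) - (starRingEnd ℂ) (w j) = 2 / ((starRingEnd ℂ) (z j) + 1) := by
      intro j
      have := congrArg (starRingEnd ℂ) (e1 j)
      simp only [map_sub, map_one, map_div₀, map_add, map_ofNat] at this
      exact this
    have e3 : ∀ i j, (1:ℂ) - w i * (starRingEnd ℂ) (w j)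
        = 2 * (z i + (starRingEnd ℂ) (z j)) / ((z i + 1) * ((starRingEnd ℂ) (z j) + 1)) := by
      intro i j
      have hwi : w i = 1 - 2 / (z i + 1) := by
        have := e1 i; linear_combination -this
      have hwj : (starRingEnd ℂ) (w j) = 1 - 2 / ((starRingEnd ℂ) (z j) + 1) := by
        have := e2 j; linear_combination -this
      rw [hwi, hwj]
      field_simp [hz1 i, hcz1 j]
      ring
    have hident : ∀ i j, 2 * (c i * (starRingEnd ℂ) (c j) *
        ((ψ (z i) + (starRingEnd ℂ) (ψ (z j))) / (z i + (starRingEnd ℂ) (z j))))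
        = d i * (starRingEnd ℂ) (d j) *
          ((f (w i) + (starRingEnd ℂ) (f (w j))) * (1 - w i * (starRingEnd ℂ) (w j))⁻¹) := by
      intro i j
      have hinv : (z i + (starRingEnd ℂ) (z j))⁻¹ = (2:ℂ)⁻¹ *
          ((1 - w i) * (1 - (starRingEnd ℂ) (w j)) * (1 - w i * (starRingEnd ℂ) (w j))⁻¹) := by
        apply inv_eq_of_mul_eq_one_left
        rw [e1 i, e2 j, e3 i j]
        have h4 : ((z i + 1) * ((starRingEnd ℂ) (z j) + 1)) ≠ 0 :=
          mul_ne_zero (hz1 i) (hcz1 j)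
        field_simp
        exact div_self (mul_ne_zero h4 (hsum0 i j))
      rw [hfw i, hfw j, div_eq_mul_inv, hinv]
      simp only [hddef, map_mul, map_sub, map_one]
      ring
    have hSeq : 2 * (∑ i, ∑ j, c i * (starRingEnd ℂ) (c j) *
        ((ψ (z i) + (starRingEnd ℂ) (ψ (z j))) / (z i + (starRingEnd ℂ) (z j))))
        = ∑ i, ∑ j, d i * (starRingEnd ℂ) (d j) *
          ((f (w i) + (starRingEnd ℂ) (f (w j))) * (1 - w i * (starRingEnd ℂ) (w j))⁻¹) := by
      rw [Finset.mul_sum]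
      apply Finset.sum_congr rfl
      intro i _
      rw [Finset.mul_sum]
      apply Finset.sum_congr rfl
      intro j _
      exact hident i j
    have hre2 := congrArg Complex.re hSeq
    have him2 := congrArg Complex.im hSeq
    simp only [Complex.mul_re, Complex.mul_im, Complex.re_ofNat, Complex.im_ofNat,
      zero_mul, mul_zero, sub_zero, add_zero, zero_add] at hre2 him2
    constructor
    · have hfin : 0 ≤ (∑ i, ∑ j, c i * (starRingEnd ℂ) (c j) *
          ((ψ (z i) + (starRingEnd ℂ) (ψ (z j))) / (z i + (starRingEnd ℂ) (z j)))).re := by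
        linarith [hdre, hre2]
      exact hfin
    · have hfin : (∑ i, ∑ j, c i * (starRingEnd ℂ) (c j) *
          ((ψ (z i) + (starRingEnd ℂ) (ψ (z j))) / (z i + (starRingEnd ℂ) (z j)))).im = 0 := by
        linarith [hdim, him2]
      exact hfin
  · intro hpos z hz
    obtain ⟨h1, _⟩ := hpos 1 (fun _ => 1) (fun _ => ⟨z, hz⟩)
    simp only [Fin.sum_univ_one, map_one, one_mul] at h1
    rw [Complex.add_conj, Complex.add_conj] at h1
    rw [← Complex.ofReal_div, Complex.ofReal_re] at h1
    have hz' : (0:ℝ) < z.re := hz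
    have hzre : (0:ℝ) < 2 * z.re := by linarith
    have := mul_nonneg h1 hzre.le
    rw [div_mul_cancel₀ _ (ne_of_gt hzre)] at this
    linarith

end

/-- Nevanlinna: a holomorphic `ψ` on `ℍ` has nonnegative real part iff
`(ψ(z) + conj ψ(w))/(z + conj w)` is a positive kernel on `ℍ`. -/
theorem nevanlinna_pos_kernel (ψ : ℂ → ℂ) (hol : DifferentiableOn ℂ ψ RHP) :
    (∀ z ∈ RHP, 0 ≤ (ψ z).re) ↔
      IsPosKernel (fun z w : RHP =>
        (ψ z + (starRingEnd ℂ) (ψ w)) / ((z : ℂ) + (starRingEnd ℂ) (w : ℂ))) := by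
  exact nevanlinna_aux ψ hol
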